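/- Consider an L-layer GCN as below, with each activation additionally satisfying φ^{(ℓ)}(0) = 0 and with every weight matrix satisfying ‖W^{(ℓ)}‖₂ ≥ 1. Let Ã, Ã' ∈ ℝ^{n×n} satisfy ‖Ã‖₂ ≤ 1, ‖Ã'‖₂ ≤ 1, and ‖Ã − Ã'‖₂ ≤ ε₁, and let X, X' ∈ ℝ^{n×K} satisfy ‖X − X'‖_F ≤ ε₂ and ‖X'‖_F ≤ B. Then, for simultaneous structural and feature perturbations: ‖F_Ã(X) − F_{Ã'}(X')‖_F ≤ (∏_{ℓ=1}^{L} ‖W^{(ℓ)}‖₂) · (ε₂ + B · ε₁ · (1 + L · ∏_{ℓ=1}^{L} ‖W^{(ℓ)}‖₂)). -/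

import Mathlib

open scoped BigOperators

/-- An `L`-layer GCN: `H⁽⁰⁾ = X` and `H⁽ˡ⁺¹⁾ = φ⁽ˡ⁺¹⁾(Ã H⁽ˡ⁾ W⁽ˡ⁺¹⁾)`, with the
activation applied entrywise. -/
noncomputable def gcn {n : ℕ} (d : ℕ → ℕ) (φ : ℕ → ℝ → ℝ)
    (A : Matrix (Fin n) (Fin n) ℝ)
    (W : (ℓ : ℕ) → Matrix (Fin (d ℓ)) (Fin (d (ℓ + 1))) ℝ)
    (X : Matrix (Fin n) (Fin (d 0)) ℝ) : (ℓ : ℕ) → Matrix (Fin n) (Fin (d ℓ)) ℝ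
  | 0 => X
  | (ℓ + 1) => (A * gcn d φ A W X ℓ * W ℓ).map (φ (ℓ + 1))

/-- The Frobenius norm of a real matrix. -/
noncomputable def frob {n m : ℕ} (M : Matrix (Fin n) (Fin m) ℝ) : ℝ :=
  Real.sqrt (∑ i : Fin n, ∑ j : Fin m, (M i j) ^ 2)

/-- The spectral norm (operator norm induced by the Euclidean vector norm) of a real
matrix. -/
noncomputable def spec {n m : ℕ} (M : Matrix (Fin n) (Fin m) ℝ) : ℝ :=
  ‖LinearMap.toContinuousLinearMap (Matrix.toEuclideanLin M)‖

open Matrix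

lemma frob_nonneg {n m : ℕ} (M : Matrix (Fin n) (Fin m) ℝ) : 0 ≤ frob M := Real.sqrt_nonneg _

lemma spec_nonneg {n m : ℕ} (M : Matrix (Fin n) (Fin m) ℝ) : 0 ≤ spec M := norm_nonneg _

lemma eucl_norm_sq {m : ℕ} (v : Fin m → ℝ) :
    ‖(EuclideanSpace.equiv (Fin m) ℝ).symm v‖ ^ 2 = ∑ j, (v j) ^ 2 := by
  rw [EuclideanSpace.norm_eq, Real.sq_sqrt (by positivity)]
  simp [Real.norm_eq_abs, sq_abs]

lemma mulVec_sq_sum_le {n m : ℕ} (A : Matrix (Fin n) (Fin m) ℝ) (v : Fin m → ℝ) :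
    ∑ i, (A.mulVec v i) ^ 2 ≤ spec A ^ 2 * ∑ j, (v j) ^ 2 := by
  have hmv : ‖(EuclideanSpace.equiv (Fin n) ℝ).symm (A.mulVec v)‖ ≤
      spec A * ‖(EuclideanSpace.equiv (Fin m) ℝ).symm v‖ :=
    Matrix.l2_opNorm_mulVec A ((EuclideanSpace.equiv (Fin m) ℝ).symm v)
  have := pow_le_pow_left₀ (norm_nonneg _) hmv 2
  rwa [mul_pow, eucl_norm_sq, eucl_norm_sq] at this

lemma spec_eq_l2 {n m : ℕ} (M : Matrix (Fin n) (Fin m) ℝ) :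
    spec M = @norm _ Matrix.instL2OpNormedAddCommGroup.toNorm M := rfl

lemma spec_transpose {n m : ℕ} (M : Matrix (Fin n) (Fin m) ℝ) : spec Mᵀ = spec M := by
  rw [spec_eq_l2, spec_eq_l2, ← Matrix.conjTranspose_eq_transpose_of_trivial]
  exact Matrix.l2_opNorm_conjTranspose M

lemma frob_transpose {n m : ℕ} (M : Matrix (Fin n) (Fin m) ℝ) : frob Mᵀ = frob M := by
  rw [frob, frob, Finset.sum_comm]
  rfl

lemma frob_mul_left {n m k : ℕ} (A : Matrix (Fin n) (Fin m) ℝ) (M : Matrix (Fin m) (Fin k) ℝ) :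
    frob (A * M) ≤ spec A * frob M := by
  have h : ∀ j : Fin k, ∑ i, ((A * M) i j) ^ 2 ≤ spec A ^ 2 * ∑ i, (M i j) ^ 2 := by
    intro j
    have := mulVec_sq_sum_le A (fun i => M i j)
    simpa [Matrix.mulVec, Matrix.mul_apply, dotProduct] using this
  calc frob (A * M) = Real.sqrt (∑ j : Fin k, ∑ i : Fin n, ((A * M) i j) ^ 2) := by
        rw [frob, Finset.sum_comm]
    _ ≤ Real.sqrt (∑ j : Fin k, spec A ^ 2 * ∑ i : Fin m, (M i j) ^ 2) :=
        Real.sqrt_le_sqrt (Finset.sum_le_sum fun j _ => h j)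
    _ = spec A * frob M := by
        rw [← Finset.mul_sum, Real.sqrt_mul (sq_nonneg _), Real.sqrt_sq (spec_nonneg A), frob]
        congr 2
        exact Finset.sum_comm

lemma frob_mul_right {n m k : ℕ} (M : Matrix (Fin n) (Fin m) ℝ) (Wm : Matrix (Fin m) (Fin k) ℝ) :
    frob (M * Wm) ≤ frob M * spec Wm := by
  have : frob (M * Wm) = frob (Wmᵀ * Mᵀ) := by rw [← Matrix.transpose_mul, frob_transpose]
  rw [this, mul_comm, ← spec_transpose Wm, ← frob_transpose M]
  exact frob_mul_left _ _

lemma frob_eq_norm {n m : ℕ} (M : Matrix (Fin n) (Fin m) ℝ) :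
    frob M = ‖(EuclideanSpace.equiv (Fin n × Fin m) ℝ).symm (fun p => M p.1 p.2)‖ := by
  rw [EuclideanSpace.norm_eq, frob]
  congr 1
  simp [Real.norm_eq_abs, sq_abs, Fintype.sum_prod_type]

lemma frob_add_le {n m : ℕ} (X Y : Matrix (Fin n) (Fin m) ℝ) :
    frob (X + Y) ≤ frob X + frob Y := by
  rw [frob_eq_norm, frob_eq_norm, frob_eq_norm]
  refine le_trans (le_of_eq ?_) (norm_add_le _ _)
  rw [← map_add]
  rfl

lemma frob_map_sub_le {n m : ℕ} {f : ℝ → ℝ} (hf : LipschitzWith 1 f)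
    (M N : Matrix (Fin n) (Fin m) ℝ) :
    frob (M.map f - N.map f) ≤ frob (M - N) := by
  apply Real.sqrt_le_sqrt
  refine Finset.sum_le_sum fun i _ => Finset.sum_le_sum fun j _ => ?_
  have h := hf.dist_le_mul (M i j) (N i j)
  rw [Real.dist_eq, Real.dist_eq, NNReal.coe_one, one_mul] at h
  simp only [Matrix.sub_apply, Matrix.map_apply]
  calc (f (M i j) - f (N i j)) ^ 2 = |f (M i j) - f (N i j)| ^ 2 := (sq_abs _).symm
    _ ≤ |M i j - N i j| ^ 2 := by gcongr
    _ = (M i j - N i j) ^ 2 := sq_abs _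

lemma frob_map_le {n m : ℕ} {f : ℝ → ℝ} (hf : LipschitzWith 1 f) (hf0 : f 0 = 0)
    (M : Matrix (Fin n) (Fin m) ℝ) : frob (M.map f) ≤ frob M := by
  apply Real.sqrt_le_sqrt
  refine Finset.sum_le_sum fun i _ => Finset.sum_le_sum fun j _ => ?_
  have h := hf.dist_le_mul (M i j) 0
  rw [Real.dist_eq, Real.dist_eq, NNReal.coe_one, one_mul, hf0, sub_zero, sub_zero] at h
  simp only [Matrix.map_apply]
  calc f (M i j) ^ 2 = |f (M i j)| ^ 2 := (sq_abs _).symm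
    _ ≤ |M i j| ^ 2 := by gcongr
    _ = (M i j) ^ 2 := sq_abs _

/-- Appendix E bound: simultaneous structural (budget `ε₁`) and feature (budget `ε₂`)
perturbations of an `L`-layer GCN with 1-Lipschitz activations vanishing at `0`, weight
matrices of spectral norm at least `1`, `‖Ã‖₂, ‖Ã'‖₂ ≤ 1` and `‖X'‖_F ≤ B`:
`‖F_Ã(X) − F_{Ã'}(X')‖_F ≤ (∏ ℓ, ‖W⁽ˡ⁾‖₂) (ε₂ + B ε₁ (1 + L ∏ ℓ, ‖W⁽ˡ⁾‖₂))`. -/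
theorem gcn_simultaneous_attack_bound
    {n : ℕ} (L : ℕ) (d : ℕ → ℕ) (φ : ℕ → ℝ → ℝ)
    (W : (ℓ : ℕ) → Matrix (Fin (d ℓ)) (Fin (d (ℓ + 1))) ℝ)
    (hφ : ∀ ℓ, LipschitzWith 1 (φ ℓ)) (hφ0 : ∀ ℓ, φ ℓ 0 = 0)
    (hW : ∀ ℓ < L, 1 ≤ spec (W ℓ))
    (A A' : Matrix (Fin n) (Fin n) ℝ) (ε₁ ε₂ B : ℝ)
    (hA : spec A ≤ 1) (hA' : spec A' ≤ 1) (hAA' : spec (A - A') ≤ ε₁)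
    (X X' : Matrix (Fin n) (Fin (d 0)) ℝ)
    (hX : frob (X - X') ≤ ε₂) (hX' : frob X' ≤ B) :
    frob (gcn d φ A W X L - gcn d φ A' W X' L) ≤
      (∏ ℓ ∈ Finset.range L, spec (W ℓ)) *
        (ε₂ + B * ε₁ * (1 + (L : ℝ) * ∏ ℓ ∈ Finset.range L, spec (W ℓ))) := by

  have hε₁ : 0 ≤ ε₁ := le_trans (spec_nonneg _) hAA'
  have hB : 0 ≤ B := le_trans (frob_nonneg _) hX'
  have hPnn : ∀ ℓ : ℕ, 0 ≤ ∏ k ∈ Finset.range ℓ, spec (W k) :=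
    fun ℓ => Finset.prod_nonneg fun k _ => spec_nonneg _
  -- bound on the clean trajectory
  have hH : ∀ ℓ : ℕ, frob (gcn d φ A' W X' ℓ) ≤ (∏ k ∈ Finset.range ℓ, spec (W k)) * B := by
    intro ℓ
    induction ℓ with
    | zero => simpa [gcn] using hX'
    | succ ℓ ih =>
      calc frob (gcn d φ A' W X' (ℓ + 1))
          = frob ((A' * gcn d φ A' W X' ℓ * W ℓ).map (φ (ℓ + 1))) := rfl
        _ ≤ frob (A' * gcn d φ A' W X' ℓ * W ℓ) := frob_map_le (hφ _) (hφ0 _) _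
        _ ≤ frob (A' * gcn d φ A' W X' ℓ) * spec (W ℓ) := frob_mul_right _ _
        _ ≤ (spec A' * frob (gcn d φ A' W X' ℓ)) * spec (W ℓ) :=
            mul_le_mul_of_nonneg_right (frob_mul_left _ _) (spec_nonneg _)
        _ ≤ (1 * ((∏ k ∈ Finset.range ℓ, spec (W k)) * B)) * spec (W ℓ) :=
            mul_le_mul_of_nonneg_right
              (mul_le_mul hA' ih (frob_nonneg _) zero_le_one) (spec_nonneg _)
        _ = (∏ k ∈ Finset.range (ℓ + 1), spec (W k)) * B := by
            rw [Finset.prod_range_succ]; ring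
  -- main induction
  have main : ∀ ℓ : ℕ, frob (gcn d φ A W X ℓ - gcn d φ A' W X' ℓ) ≤
      (∏ k ∈ Finset.range ℓ, spec (W k))
        * (ε₂ + (ℓ : ℝ) * ε₁ * B) := by
    intro ℓ
    induction ℓ with
    | zero => simpa [gcn] using hX
    | succ ℓ ih =>
      set G := gcn d φ A W X ℓ with hG
      set G' := gcn d φ A' W X' ℓ with hG'
      have hsplit : A * G * W ℓ - A' * G' * W ℓ
          = (A * (G - G') + (A - A') * G') * W ℓ := by
        simp only [Matrix.add_mul, Matrix.sub_mul, Matrix.mul_sub]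
        abel
      calc frob (gcn d φ A W X (ℓ + 1) - gcn d φ A' W X' (ℓ + 1))
          = frob ((A * G * W ℓ).map (φ (ℓ + 1)) - (A' * G' * W ℓ).map (φ (ℓ + 1))) := rfl
        _ ≤ frob (A * G * W ℓ - A' * G' * W ℓ) := frob_map_sub_le (hφ _) _ _
        _ = frob ((A * (G - G') + (A - A') * G') * W ℓ) := by rw [hsplit]
        _ ≤ frob (A * (G - G') + (A - A') * G') * spec (W ℓ) := frob_mul_right _ _
        _ ≤ (frob (A * (G - G')) + frob ((A - A') * G')) * spec (W ℓ) :=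
            mul_le_mul_of_nonneg_right (frob_add_le _ _) (spec_nonneg _)
        _ ≤ (spec A * frob (G - G') + spec (A - A') * frob G') * spec (W ℓ) :=
            mul_le_mul_of_nonneg_right
              (add_le_add (frob_mul_left _ _) (frob_mul_left _ _)) (spec_nonneg _)
        _ ≤ (1 * ((∏ k ∈ Finset.range ℓ, spec (W k)) * (ε₂ + (ℓ : ℝ) * ε₁ * B))
              + ε₁ * ((∏ k ∈ Finset.range ℓ, spec (W k)) * B)) * spec (W ℓ) := by
            refine mul_le_mul_of_nonneg_right (add_le_add ?_ ?_) (spec_nonneg _)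
            · exact mul_le_mul hA ih (frob_nonneg _) zero_le_one
            · exact mul_le_mul hAA' (hH ℓ) (frob_nonneg _) hε₁
        _ = (∏ k ∈ Finset.range (ℓ + 1), spec (W k))
              * (ε₂ + ((ℓ : ℕ) + 1 : ℝ) * ε₁ * B) := by
            rw [Finset.prod_range_succ]; ring
        _ = (∏ k ∈ Finset.range (ℓ + 1), spec (W k))
              * (ε₂ + ((ℓ + 1 : ℕ) : ℝ) * ε₁ * B) := by push_cast; ring
  have hP1 : (1 : ℝ) ≤ ∏ k ∈ Finset.range L, spec (W k) := by
    induction L with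
    | zero => simp
    | succ L ihL =>
      rw [Finset.prod_range_succ]
      have h1 := ihL (fun k hk => hW k (Nat.lt_succ_of_lt hk))
      have h2 := hW L (Nat.lt_succ_self L)
      nlinarith
  refine le_trans (main L) ?_
  have : ε₂ + (L : ℝ) * ε₁ * B ≤
      ε₂ + B * ε₁ * (1 + (L : ℝ) * ∏ ℓ ∈ Finset.range L, spec (W ℓ)) := by
    have h1 : (L : ℝ) * ε₁ * B * 1 ≤ (L : ℝ) * ε₁ * B * ∏ ℓ ∈ Finset.range L, spec (W ℓ) :=
      mul_le_mul_of_nonneg_left hP1 (by positivity)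
    nlinarith [mul_nonneg hB hε₁]
  exact mul_le_mul_of_nonneg_left this (hPnn L)
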